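/- The partition function Z^(n)(u;v;λ) of the n×n SOS model with domain wall boundary conditions, viewed as a function of u_n with all other variables fixed, is an elliptic polynomial of degree n with character χ given by χ(1) = (-1)^n and χ(τ) = (-1)^n exp(2πi(λ + Σ_{j=1}^n v_j)); i.e., Z satisfies Z(u_n+1) = (-1)^n Z(u_n) and Z(u_n+τ) = (-1)^n e^{2πi(λ+Σ_j v_j)} e^{-2πin·u_n - πinτ} Z(u_n). -/

import Mathlib

/-- Boltzmann weight of an SOS vertex with surrounding heights
`x = d_{i,j-1}`, `y = d_{i-1,j-1}`, `z = d_{i-1,j}`, `d = d_{ij}`, spectral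
parameter `w = u_i - v_j` and anisotropy `h = ℏ` (the dynamical parameter is
`ℏ d_{ij}`); the weight vanishes on non-admissible local configurations. -/
noncomputable def sosW (θ : ℂ → ℂ) (h w x y z d : ℂ) : ℂ := by
  classical
  exact
    if x = d + 1 ∧ z = d + 1 ∧ y = d + 2 then θ (w + h)
    else if x = d - 1 ∧ z = d - 1 ∧ y = d - 2 then θ (w + h)
    else if x = d - 1 ∧ z = d + 1 ∧ y = d then θ w * θ (h * d + h) / θ (h * d)
    else if x = d + 1 ∧ z = d - 1 ∧ y = d then θ w * θ (h * d - h) / θ (h * d)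
    else if x = d - 1 ∧ z = d - 1 ∧ y = d then θ (w + h * d) * θ h / θ (h * d)
    else if x = d + 1 ∧ z = d + 1 ∧ y = d then θ (w - h * d) * θ h / θ (-(h * d))
    else 0

/-- A height configuration of the `n × n` SOS model with domain wall boundary
conditions: neighbouring heights differ by `±1`, the boundary heights are fixed
by the domain-wall conditions and the corner height satisfies `ℏ d_{nn} = λ`. -/
def SOSDWBC (n : ℕ) (h lam : ℂ) (d : Fin (n + 1) → Fin (n + 1) → ℂ) : Prop :=
  (∀ (i : Fin n) (j : Fin (n + 1)),
      d i.succ j - d i.castSucc j = 1 ∨ d i.succ j - d i.castSucc j = -1) ∧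
  (∀ (i : Fin (n + 1)) (j : Fin n),
      d i j.succ - d i j.castSucc = 1 ∨ d i j.succ - d i j.castSucc = -1) ∧
  (∀ i : Fin n, d i.castSucc (Fin.last n) - d i.succ (Fin.last n) = 1) ∧
  (∀ j : Fin n, d 0 j.castSucc - d 0 j.succ = -1) ∧
  (∀ i : Fin n, d i.castSucc 0 - d i.succ 0 = -1) ∧
  (∀ j : Fin n, d (Fin.last n) j.castSucc - d (Fin.last n) j.succ = 1) ∧
  h * d (Fin.last n) (Fin.last n) = lam

/-- The partition function `Z^(n)(u;v;λ)` of the `n × n` SOS model with domain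
wall boundary conditions: the sum over all admissible height configurations of
the product of the Boltzmann weights of all vertices. -/
noncomputable def sosZ (n : ℕ) (θ : ℂ → ℂ) (h : ℂ) (u v : Fin n → ℂ) (lam : ℂ) : ℂ :=
  ∑' dc : { d : Fin (n + 1) → Fin (n + 1) → ℂ // SOSDWBC n h lam d },
    ∏ i : Fin n, ∏ j : Fin n,
      sosW θ h (u i - v j) (dc.1 i.succ j.castSucc) (dc.1 i.castSucc j.castSucc)
        (dc.1 i.castSucc j.succ) (dc.1 i.succ j.succ)

lemma sosW_cases (θ : ℂ → ℂ) (h x y z d : ℂ) :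
    (∀ w, sosW θ h w x y z d = 0) ∨
      ∃ s C, ∀ w, sosW θ h w x y z d = C * θ (w + s) := by
  by_cases h1 : x = d + 1 ∧ z = d + 1 ∧ y = d + 2
  · exact Or.inr ⟨h, 1, fun w => by unfold sosW; rw [if_pos h1]; ring⟩
  by_cases h2 : x = d - 1 ∧ z = d - 1 ∧ y = d - 2
  · exact Or.inr ⟨h, 1, fun w => by unfold sosW; rw [if_neg h1, if_pos h2]; ring⟩
  by_cases h3 : x = d - 1 ∧ z = d + 1 ∧ y = d
  · exact Or.inr ⟨0, θ (h * d + h) / θ (h * d), fun w => by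
      unfold sosW; rw [if_neg h1, if_neg h2, if_pos h3]; rw [add_zero]; ring⟩
  by_cases h4 : x = d + 1 ∧ z = d - 1 ∧ y = d
  · exact Or.inr ⟨0, θ (h * d - h) / θ (h * d), fun w => by
      unfold sosW; rw [if_neg h1, if_neg h2, if_neg h3, if_pos h4]; rw [add_zero]; ring⟩
  by_cases h5 : x = d - 1 ∧ z = d - 1 ∧ y = d
  · exact Or.inr ⟨h * d, θ h / θ (h * d), fun w => by
      unfold sosW; rw [if_neg h1, if_neg h2, if_neg h3, if_neg h4, if_pos h5]; ring⟩
  by_cases h6 : x = d + 1 ∧ z = d + 1 ∧ y = d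
  · exact Or.inr ⟨-(h * d), θ h / θ (-(h * d)), fun w => by
      unfold sosW; rw [if_neg h1, if_neg h2, if_neg h3, if_neg h4, if_neg h5, if_pos h6]
      rw [sub_eq_add_neg]; ring⟩
  · exact Or.inl fun w => by
      unfold sosW; rw [if_neg h1, if_neg h2, if_neg h3, if_neg h4, if_neg h5, if_neg h6]

lemma sosW_add_one (θ : ℂ → ℂ) (hp1 : ∀ x, θ (x + 1) = -θ x) (h w x y z d : ℂ) :
    sosW θ h (w + 1) x y z d = -sosW θ h w x y z d := by
  rcases sosW_cases θ h x y z d with h0 | ⟨s, C, hC⟩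
  · rw [h0, h0, neg_zero]
  · rw [hC, hC, show w + 1 + s = (w + s) + 1 by ring, hp1]; ring

lemma sosW_diff (θ : ℂ → ℂ) (hθd : Differentiable ℂ θ) (h c x y z d : ℂ) :
    Differentiable ℂ (fun w => sosW θ h (w - c) x y z d) := by
  rcases sosW_cases θ h x y z d with h0 | ⟨s, C, hC⟩
  · have : (fun w => sosW θ h (w - c) x y z d) = fun _ => 0 := funext fun w => h0 _
    rw [this]; exact differentiable_const 0
  · have : (fun w => sosW θ h (w - c) x y z d) = fun w => C * θ (w - c + s) :=
      funext fun w => hC _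
    rw [this]
    exact (hθd.comp (((differentiable_id).sub_const c).add_const s)).const_mul C

lemma sosW_branch_a (θ : ℂ → ℂ) (h w y z d : ℂ) (h2 : z = d + 1) (h3 : y = d + 2) :
    sosW θ h w (d + 1) y z d = θ (w + h) := by
  unfold sosW; rw [if_pos ⟨rfl, h2, h3⟩]

lemma sosW_branch_bbar (θ : ℂ → ℂ) (h w y z d : ℂ) (h2 : z = d - 1) (h3 : y = d) :
    sosW θ h w (d + 1) y z d = θ w * θ (h * d - h) / θ (h * d) := by
  unfold sosW
  rw [if_neg (by rintro ⟨-, hz, -⟩; exact two_ne_zero (by linear_combination h2 - hz : (2:ℂ) = 0)),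
    if_neg (by rintro ⟨hx, -, -⟩; exact two_ne_zero (by linear_combination hx : (2:ℂ) = 0)),
    if_neg (by rintro ⟨hx, -, -⟩; exact two_ne_zero (by linear_combination hx : (2:ℂ) = 0)),
    if_pos ⟨rfl, h2, h3⟩]

lemma sosW_branch_cbar (θ : ℂ → ℂ) (h w y z d : ℂ) (h2 : z = d + 1) (h3 : y = d) :
    sosW θ h w (d + 1) y z d = θ (w - h * d) * θ h / θ (-(h * d)) := by
  unfold sosW
  rw [if_neg (by rintro ⟨-, -, hy⟩; exact two_ne_zero (by linear_combination h3 - hy : (2:ℂ) = 0)),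
    if_neg (by rintro ⟨hx, -, -⟩; exact two_ne_zero (by linear_combination hx : (2:ℂ) = 0)),
    if_neg (by rintro ⟨hx, -, -⟩; exact two_ne_zero (by linear_combination hx : (2:ℂ) = 0)),
    if_neg (by rintro ⟨-, hz, -⟩; exact two_ne_zero (by linear_combination hz - h2 : (2:ℂ) = 0)),
    if_neg (by rintro ⟨hx, -, -⟩; exact two_ne_zero (by linear_combination hx : (2:ℂ) = 0)),
    if_pos ⟨rfl, h2, h3⟩]

lemma sosW_branch_zero (θ : ℂ → ℂ) (h w y z d : ℂ) (h2 : z = d - 1) (h3 : y = d + 2) :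
    sosW θ h w (d + 1) y z d = 0 := by
  unfold sosW
  rw [if_neg (by rintro ⟨-, hz, -⟩; exact two_ne_zero (by linear_combination h2 - hz : (2:ℂ) = 0)),
    if_neg (by rintro ⟨hx, -, -⟩; exact two_ne_zero (by linear_combination hx : (2:ℂ) = 0)),
    if_neg (by rintro ⟨hx, -, -⟩; exact two_ne_zero (by linear_combination hx : (2:ℂ) = 0)),
    if_neg (by rintro ⟨-, -, hy⟩; exact two_ne_zero (by linear_combination hy - h3 : (2:ℂ) = 0)),
    if_neg (by rintro ⟨hx, -, -⟩; exact two_ne_zero (by linear_combination hx : (2:ℂ) = 0)),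
    if_neg (by rintro ⟨-, -, hy⟩; exact two_ne_zero (by linear_combination hy - h3 : (2:ℂ) = 0))]

lemma fin_Ici_last (n : ℕ) : Finset.Ici (Fin.last n) = {Fin.last n} := by
  ext a; simp [Finset.mem_Ici, Fin.le_def, Fin.ext_iff, Fin.last]
  omega

lemma fin_Ici_castSucc {n : ℕ} (i : Fin n) :
    Finset.Ici i.castSucc = insert i.castSucc (Finset.Ici i.succ) := by
  ext a
  simp only [Finset.mem_Ici, Finset.mem_insert, Fin.le_def, Fin.ext_iff,
    Fin.coe_castSucc, Fin.val_succ]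
  omega

lemma fin_castSucc_not_mem_Ici {n : ℕ} (i : Fin n) :
    i.castSucc ∉ Finset.Ici i.succ := by
  simp [Finset.mem_Ici, Fin.le_def]

lemma fin_Ici_zero (n : ℕ) : Finset.Ici (0 : Fin (n + 1)) = Finset.univ := by
  ext a; simp [Fin.zero_le]

lemma diff_finset_prod {ι : Type*} (s : Finset ι) (f : ι → ℂ → ℂ)
    (hf : ∀ i ∈ s, Differentiable ℂ (f i)) :
    Differentiable ℂ (fun w => ∏ i ∈ s, f i w) := by
  classical
  induction s using Finset.induction with
  | empty => simpa using differentiable_const (1 : ℂ)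
  | insert _ _ hns ih =>
    simp only [Finset.prod_insert hns]
    exact (hf _ (Finset.mem_insert_self _ _)).mul
      (ih fun i hi => hf i (Finset.mem_insert_of_mem hi))

section shifts
variable (θ : ℂ → ℂ) (τ : ℂ)

lemma sosW_shift_bbar (hp2 : ∀ x, θ (x + τ) = -Complex.exp (-(2 * (Real.pi : ℂ) * Complex.I * x) - (Real.pi : ℂ) * Complex.I * τ) * θ x) (h w c y z d : ℂ) (h2 : z = d - 1) (h3 : y = d) :
    sosW θ h (w + τ - c) (d + 1) y z d =
      (-Complex.exp (-(2 * (Real.pi : ℂ) * Complex.I * (w - c)) - (Real.pi : ℂ) * Complex.I * τ)) *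
        sosW θ h (w - c) (d + 1) y z d := by
  rw [sosW_branch_bbar θ h _ y z d h2 h3, sosW_branch_bbar θ h _ y z d h2 h3,
    show w + τ - c = (w - c) + τ by ring, hp2]
  ring

lemma sosW_shift_a (hp2 : ∀ x, θ (x + τ) = -Complex.exp (-(2 * (Real.pi : ℂ) * Complex.I * x) - (Real.pi : ℂ) * Complex.I * τ) * θ x) (h w c y z d : ℂ) (h2 : z = d + 1) (h3 : y = d + 2) :
    sosW θ h (w + τ - c) (d + 1) y z d =
      (-Complex.exp (-(2 * (Real.pi : ℂ) * Complex.I * (w - c)) - (Real.pi : ℂ) * Complex.I * τ)) *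
        Complex.exp (-(2 * (Real.pi : ℂ) * Complex.I * h)) *
        sosW θ h (w - c) (d + 1) y z d := by
  rw [sosW_branch_a θ h _ y z d h2 h3, sosW_branch_a θ h _ y z d h2 h3,
    show w + τ - c + h = ((w - c) + h) + τ by ring, hp2 ((w - c) + h)]
  have he : Complex.exp (-(2 * (Real.pi : ℂ) * Complex.I * ((w - c) + h)) - (Real.pi : ℂ) * Complex.I * τ) =
      Complex.exp (-(2 * (Real.pi : ℂ) * Complex.I * (w - c)) - (Real.pi : ℂ) * Complex.I * τ) *
        Complex.exp (-(2 * (Real.pi : ℂ) * Complex.I * h)) := by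
    rw [← Complex.exp_add]; congr 1; ring
  rw [he]; ring

lemma sosW_shift_cbar (hp2 : ∀ x, θ (x + τ) = -Complex.exp (-(2 * (Real.pi : ℂ) * Complex.I * x) - (Real.pi : ℂ) * Complex.I * τ) * θ x) (h w c y z d : ℂ) (h2 : z = d + 1) (h3 : y = d) :
    sosW θ h (w + τ - c) (d + 1) y z d =
      (-Complex.exp (-(2 * (Real.pi : ℂ) * Complex.I * (w - c)) - (Real.pi : ℂ) * Complex.I * τ)) *
        Complex.exp (2 * (Real.pi : ℂ) * Complex.I * (h * d)) *
        sosW θ h (w - c) (d + 1) y z d := by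
  rw [sosW_branch_cbar θ h _ y z d h2 h3, sosW_branch_cbar θ h _ y z d h2 h3,
    show w + τ - c - h * d = ((w - c) - h * d) + τ by ring, hp2 ((w - c) - h * d)]
  have he : Complex.exp (-(2 * (Real.pi : ℂ) * Complex.I * ((w - c) - h * d)) - (Real.pi : ℂ) * Complex.I * τ) =
      Complex.exp (-(2 * (Real.pi : ℂ) * Complex.I * (w - c)) - (Real.pi : ℂ) * Complex.I * τ) *
        Complex.exp (2 * (Real.pi : ℂ) * Complex.I * (h * d)) := by
    rw [← Complex.exp_add]; congr 1; ring
  rw [he]; ring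

end shifts

lemma sosDWBC_finite (m : ℕ) (h lam : ℂ) (hh : h ≠ 0) :
    Finite {d : Fin (m + 1) → Fin (m + 1) → ℂ // SOSDWBC m h lam d} := by
  classical
  set S : Finset ℂ := (Finset.Icc (-(2 * (m : ℤ))) (2 * (m : ℤ))).image
    (fun k : ℤ => lam / h + (k : ℂ)) with hS
  have key : ∀ d, SOSDWBC m h lam d → ∀ i j, d i j ∈ S := by
    intro d hd i j
    obtain ⟨h1, h2, h3, h4, h5, h6, h7⟩ := hd
    have hc : d (Fin.last m) (Fin.last m) = lam / h := by
      field_simp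
      linear_combination h7
    have colA : ∀ i : Fin (m + 1), ∃ k : ℤ,
        k.natAbs ≤ m - (i : ℕ) ∧ d i (Fin.last m) = lam / h + (k : ℂ) := by
      intro i
      induction i using Fin.reverseInduction with
      | last => exact ⟨0, by simp, by simp [hc]⟩
      | cast i ih =>
        obtain ⟨k, hk1, hk2⟩ := ih
        rcases h1 i (Fin.last m) with hstep | hstep
        · refine ⟨k - 1, ?_, ?_⟩
          · have := i.isLt; simp only [Fin.val_succ] at hk1; simp only [Fin.coe_castSucc]; omega
          · push_cast
            linear_combination hk2 - hstep
        · refine ⟨k + 1, ?_, ?_⟩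
          · have := i.isLt; simp only [Fin.val_succ] at hk1; simp only [Fin.coe_castSucc]; omega
          · push_cast
            linear_combination hk2 - hstep
    have rowA : ∀ j : Fin (m + 1), ∃ k : ℤ,
        k.natAbs ≤ m - (j : ℕ) ∧ d i j = d i (Fin.last m) + (k : ℂ) := by
      intro j
      induction j using Fin.reverseInduction with
      | last => exact ⟨0, by simp, by simp⟩
      | cast j ih =>
        obtain ⟨k, hk1, hk2⟩ := ih
        rcases h2 i j with hstep | hstep
        · refine ⟨k - 1, ?_, ?_⟩
          · have := j.isLt; simp only [Fin.val_succ] at hk1; simp only [Fin.coe_castSucc]; omega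
          · push_cast
            linear_combination hk2 - hstep
        · refine ⟨k + 1, ?_, ?_⟩
          · have := j.isLt; simp only [Fin.val_succ] at hk1; simp only [Fin.coe_castSucc]; omega
          · push_cast
            linear_combination hk2 - hstep
    obtain ⟨k1, hk11, hk12⟩ := colA i
    obtain ⟨k2, hk21, hk22⟩ := rowA j
    refine Finset.mem_image.2 ⟨k1 + k2, Finset.mem_Icc.2 ⟨?_, ?_⟩, ?_⟩
    · omega
    · omega
    · push_cast
      linear_combination -hk22 - hk12
  refine Finite.of_injective
    (fun dc : {d : Fin (m + 1) → Fin (m + 1) → ℂ // SOSDWBC m h lam d} =>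
      (fun p : Fin (m + 1) × Fin (m + 1) =>
        (⟨dc.1 p.1 p.2, key _ dc.2 p.1 p.2⟩ : S))) ?_
  intro a b hab
  ext i j
  exact congrArg Subtype.val (congrFun hab (i, j))

/-- Boltzmann weight of the vertex `(n, j)` (last row) as a function of `w = u_n`. -/
noncomputable def lastG (n : ℕ) (θ : ℂ → ℂ) (h : ℂ) (v : Fin (n + 1) → ℂ)
    (dc : Fin (n + 2) → Fin (n + 2) → ℂ) (j : Fin (n + 1)) (w' : ℂ) : ℂ :=
  sosW θ h (w' - v j) (dc (Fin.last n).succ j.castSucc) (dc (Fin.last n).castSucc j.castSucc)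
    (dc (Fin.last n).castSucc j.succ) (dc (Fin.last n).succ j.succ)

noncomputable def lastB (n : ℕ) (τ : ℂ) (v : Fin (n + 1) → ℂ) (w : ℂ) (j : Fin (n + 1)) : ℂ :=
  -Complex.exp (-(2 * (Real.pi : ℂ) * Complex.I * (w - v j)) - (Real.pi : ℂ) * Complex.I * τ)

lemma lastRow_tau (n : ℕ) (τ : ℂ) (θ : ℂ → ℂ)
    (hp2 : ∀ x, θ (x + τ) =
      -Complex.exp (-(2 * (Real.pi : ℂ) * Complex.I * x) - (Real.pi : ℂ) * Complex.I * τ) * θ x)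
    (h lam : ℂ) (v : Fin (n + 1) → ℂ)
    (dc : Fin (n + 2) → Fin (n + 2) → ℂ) (hdc : SOSDWBC (n + 1) h lam dc) (w : ℂ) :
    (∏ j : Fin (n + 1), lastG n θ h v dc j (w + τ)) =
      (∏ j : Fin (n + 1), lastB n τ v w j) *
        Complex.exp (2 * (Real.pi : ℂ) * Complex.I * lam) *
        ∏ j : Fin (n + 1), lastG n θ h v dc j w := by
  obtain ⟨c1, c2, c3, c4, c5, c6, c7⟩ := hdc
  have hLs : (Fin.last n).succ = Fin.last (n + 1) := Fin.succ_last n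
  -- the bottom row of heights is explicitly determined
  have hbot : ∀ j : Fin (n + 2), h * dc (Fin.last (n + 1)) j =
      lam + (((n : ℂ) + 1) - ((j : ℕ) : ℂ)) * h := by
    intro j
    induction j using Fin.reverseInduction with
    | last =>
      simp only [Fin.val_last]
      push_cast
      linear_combination c7
    | cast j ih =>
      have hc := c6 j
      simp only [Fin.val_succ, Fin.coe_castSucc] at ih ⊢
      push_cast at ih ⊢
      linear_combination ih + h * hc
  -- x = d + 1 along the bottom row of vertices
  have hx : ∀ j : Fin (n + 1),
      dc (Fin.last n).succ j.castSucc = dc (Fin.last n).succ j.succ + 1 := by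
    intro j
    rw [hLs]
    linear_combination c6 j
  have main : ∀ k : Fin (n + 1),
      (dc (Fin.last n).castSucc k.castSucc = dc (Fin.last n).succ k.succ →
        ∏ j ∈ Finset.Ici k, lastG n θ h v dc j (w + τ) =
          (∏ j ∈ Finset.Ici k, lastB n τ v w j) *
            Complex.exp (2 * (Real.pi : ℂ) * Complex.I * lam) *
            ∏ j ∈ Finset.Ici k, lastG n θ h v dc j w) ∧
      (dc (Fin.last n).castSucc k.castSucc = dc (Fin.last n).succ k.succ + 2 →
        ∏ j ∈ Finset.Ici k, lastG n θ h v dc j (w + τ) =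
          (∏ j ∈ Finset.Ici k, lastB n τ v w j) *
            Complex.exp (-(2 * (Real.pi : ℂ) * Complex.I *
              (((n : ℂ) + 1 - ((k : ℕ) : ℂ)) * h))) *
            ∏ j ∈ Finset.Ici k, lastG n θ h v dc j w) := by
    intro k
    induction k using Fin.reverseInduction with
    | last =>
      rw [fin_Ici_last n]
      simp only [Finset.prod_singleton]
      have hzlast : dc (Fin.last n).castSucc (Fin.last n).succ =
          dc (Fin.last n).succ (Fin.last n).succ + 1 := by
        have hc3 := c3 (Fin.last n)
        rw [hLs] at hc3 ⊢
        linear_combination hc3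
      constructor
      · intro hy
        have hGs := sosW_shift_cbar θ τ hp2 h w (v (Fin.last n))
          (dc (Fin.last n).castSucc (Fin.last n).castSucc)
          (dc (Fin.last n).castSucc (Fin.last n).succ)
          (dc (Fin.last n).succ (Fin.last n).succ) hzlast hy
        have hlam : h * dc (Fin.last n).succ (Fin.last n).succ = lam := by
          rw [hLs]; exact c7
        unfold lastG lastB
        rw [hx (Fin.last n), hGs, hlam]
      · intro hy
        have hGs := sosW_shift_a θ τ hp2 h w (v (Fin.last n))
          (dc (Fin.last n).castSucc (Fin.last n).castSucc)
          (dc (Fin.last n).castSucc (Fin.last n).succ)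
          (dc (Fin.last n).succ (Fin.last n).succ) hzlast hy
        unfold lastG lastB
        rw [hx (Fin.last n), hGs,
          show ((n : ℂ) + 1 - ((Fin.last n : ℕ) : ℂ)) * h = h by
            rw [Fin.val_last]; push_cast; ring]
    | cast i ih =>
      rw [fin_Ici_castSucc i,
        Finset.prod_insert (fin_castSucc_not_mem_Ici i),
        Finset.prod_insert (fin_castSucc_not_mem_Ici i),
        Finset.prod_insert (fin_castSucc_not_mem_Ici i)]
      -- d decreases by one along the bottom row
      have hdd : dc (Fin.last n).succ i.castSucc.succ = dc (Fin.last n).succ i.succ.succ + 1 := by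
        rw [Fin.succ_castSucc]
        exact hx i.succ
      -- z of vertex i.castSucc equals y of vertex i.succ
      have hzy : dc (Fin.last n).castSucc i.castSucc.succ =
          dc (Fin.last n).castSucc i.succ.castSucc := by rw [Fin.succ_castSucc]
      have hstep := c1 (Fin.last n) i.castSucc.succ
      rw [hLs] at hstep
      rw [show (Fin.last n : Fin (n+1)).castSucc = (Fin.last n).castSucc from rfl] at hstep
      constructor
      · intro hy
        rcases hstep with hs | hs
        · -- z = d - 1 : bbar
          have hz : dc (Fin.last n).castSucc i.castSucc.succ =
              dc (Fin.last n).succ i.castSucc.succ - 1 := by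
            rw [hLs]; linear_combination -hs
          have hynext : dc (Fin.last n).castSucc i.succ.castSucc =
              dc (Fin.last n).succ i.succ.succ := by
            rw [← hzy]; linear_combination hz + hdd
          have IH := ih.1 hynext
          have hGs := sosW_shift_bbar θ τ hp2 h w (v i.castSucc)
            (dc (Fin.last n).castSucc i.castSucc.castSucc)
            (dc (Fin.last n).castSucc i.castSucc.succ)
            (dc (Fin.last n).succ i.castSucc.succ) hz hy
          rw [IH]
          unfold lastG lastB
          rw [hx i.castSucc, hGs]
          ring
        · -- z = d + 1 : cbar
          have hz : dc (Fin.last n).castSucc i.castSucc.succ =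
              dc (Fin.last n).succ i.castSucc.succ + 1 := by
            rw [hLs]; linear_combination -hs
          have hynext : dc (Fin.last n).castSucc i.succ.castSucc =
              dc (Fin.last n).succ i.succ.succ + 2 := by
            rw [← hzy]; linear_combination hz + hdd
          have IH := ih.2 hynext
          have hGs := sosW_shift_cbar θ τ hp2 h w (v i.castSucc)
            (dc (Fin.last n).castSucc i.castSucc.castSucc)
            (dc (Fin.last n).castSucc i.castSucc.succ)
            (dc (Fin.last n).succ i.castSucc.succ) hz hy
          have hb := hbot i.castSucc.succ
          rw [← hLs] at hb
          have hexp : Complex.exp (2 * (Real.pi : ℂ) * Complex.I *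
                (h * dc (Fin.last n).succ i.castSucc.succ)) *
              Complex.exp (-(2 * (Real.pi : ℂ) * Complex.I *
                (((n : ℂ) + 1 - ((i.succ : ℕ) : ℂ)) * h))) =
              Complex.exp (2 * (Real.pi : ℂ) * Complex.I * lam) := by
            rw [← Complex.exp_add]
            congr 1
            simp only [Fin.val_succ, Fin.coe_castSucc] at hb ⊢
            push_cast at hb ⊢
            linear_combination (2 * (Real.pi : ℂ) * Complex.I) * hb
          rw [IH, ← hexp]
          unfold lastG lastB
          rw [hx i.castSucc, hGs]
          ring
      · intro hy
        rcases hstep with hs | hs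
        · -- z = d - 1 : zero weight
          have hz : dc (Fin.last n).castSucc i.castSucc.succ =
              dc (Fin.last n).succ i.castSucc.succ - 1 := by
            rw [hLs]; linear_combination -hs
          have hG0 : ∀ w', lastG n θ h v dc i.castSucc w' = 0 := by
            intro w'
            unfold lastG
            rw [hx i.castSucc]
            exact sosW_branch_zero θ h _ _ _ _ hz hy
          rw [hG0, hG0]
          ring
        · -- z = d + 1 : branch a
          have hz : dc (Fin.last n).castSucc i.castSucc.succ =
              dc (Fin.last n).succ i.castSucc.succ + 1 := by
            rw [hLs]; linear_combination -hs
          have hynext : dc (Fin.last n).castSucc i.succ.castSucc =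
              dc (Fin.last n).succ i.succ.succ + 2 := by
            rw [← hzy]; linear_combination hz + hdd
          have IH := ih.2 hynext
          have hGs := sosW_shift_a θ τ hp2 h w (v i.castSucc)
            (dc (Fin.last n).castSucc i.castSucc.castSucc)
            (dc (Fin.last n).castSucc i.castSucc.succ)
            (dc (Fin.last n).succ i.castSucc.succ) hz hy
          have hexp : Complex.exp (-(2 * (Real.pi : ℂ) * Complex.I * h)) *
              Complex.exp (-(2 * (Real.pi : ℂ) * Complex.I *
                (((n : ℂ) + 1 - ((i.succ : ℕ) : ℂ)) * h))) =
              Complex.exp (-(2 * (Real.pi : ℂ) * Complex.I *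
                (((n : ℂ) + 1 - ((i.castSucc : ℕ) : ℂ)) * h))) := by
            rw [← Complex.exp_add]
            congr 1
            simp only [Fin.val_succ, Fin.coe_castSucc]
            push_cast
            ring
          rw [IH, ← hexp]
          unfold lastG lastB
          rw [hx i.castSucc, hGs]
          ring
  -- apply at k = 0
  have h0 : dc (Fin.last n).castSucc ((0 : Fin (n + 1)).castSucc) =
      dc (Fin.last n).succ ((0 : Fin (n + 1)).succ) := by
    have ha := c5 (Fin.last n)
    have hb := c6 (0 : Fin (n + 1))
    rw [hLs, Fin.castSucc_zero] at *
    linear_combination ha + hb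
  have := (main 0).1 h0
  rw [show Finset.Ici (0 : Fin (n + 1)) = Finset.univ from by ext a; simp [Fin.zero_le]] at this
  exact this

/-- The SOS partition function with DWBC, as a function of `u_{n}` (the last
spectral variable), is an elliptic polynomial of degree `n` with character
`χ(1) = (-1)^n`, `χ(τ) = (-1)^n e^{2πi(λ + Σ_j v_j)}`: it is entire in `u_n` and
satisfies `Z(u_n+1) = (-1)^n Z(u_n)` and
`Z(u_n+τ) = (-1)^n e^{2πi(λ+Σ v_j)} e^{-2πin u_n - πinτ} Z(u_n)`.
(Stated for lattices of size `n+1`.) -/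
theorem sosZ_elliptic_polynomial (n : ℕ) (τ : ℂ) (hτ : 0 < τ.im) (θ : ℂ → ℂ)
    (hθd : Differentiable ℂ θ) (hodd : ∀ x, θ (-x) = -θ x)
    (hp1 : ∀ x, θ (x + 1) = -θ x)
    (hp2 : ∀ x, θ (x + τ) =
      -Complex.exp (-(2 * (Real.pi : ℂ) * Complex.I * x) - (Real.pi : ℂ) * Complex.I * τ) * θ x)
    (hd0 : HasDerivAt θ 1 0)
    (h lam : ℂ) (hh : h ≠ 0) (u v : Fin (n + 1) → ℂ) :
    Differentiable ℂ
      (fun w : ℂ => sosZ (n + 1) θ h (Function.update u (Fin.last n) w) v lam) ∧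
    (∀ w : ℂ,
      sosZ (n + 1) θ h (Function.update u (Fin.last n) (w + 1)) v lam =
        (-1 : ℂ) ^ (n + 1) * sosZ (n + 1) θ h (Function.update u (Fin.last n) w) v lam) ∧
    (∀ w : ℂ,
      sosZ (n + 1) θ h (Function.update u (Fin.last n) (w + τ)) v lam =
        (-1 : ℂ) ^ (n + 1) *
          Complex.exp (2 * (Real.pi : ℂ) * Complex.I * (lam + ∑ j, v j)) *
          Complex.exp (-(2 * (Real.pi : ℂ) * Complex.I * ((n : ℂ) + 1) * w) -
            (Real.pi : ℂ) * Complex.I * ((n : ℂ) + 1) * τ) *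
          sosZ (n + 1) θ h (Function.update u (Fin.last n) w) v lam) := by
  classical
  haveI : Finite {d : Fin (n + 2) → Fin (n + 2) → ℂ // SOSDWBC (n + 1) h lam d} :=
    sosDWBC_finite (n + 1) h lam hh
  haveI : Fintype {d : Fin (n + 2) → Fin (n + 2) → ℂ // SOSDWBC (n + 1) h lam d} :=
    Fintype.ofFinite _
  set F : {d : Fin (n + 2) → Fin (n + 2) → ℂ // SOSDWBC (n + 1) h lam d} → ℂ → ℂ :=
    fun dc w' => ∏ i : Fin (n + 1), ∏ j : Fin (n + 1),
      sosW θ h (Function.update u (Fin.last n) w' i - v j) (dc.1 i.succ j.castSucc)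
        (dc.1 i.castSucc j.castSucc) (dc.1 i.castSucc j.succ) (dc.1 i.succ j.succ)
    with hFdef
  have hZ : ∀ w' : ℂ, sosZ (n + 1) θ h (Function.update u (Fin.last n) w') v lam =
      ∑ dc, F dc w' := fun w' => tsum_fintype _
  -- split off the last row
  have hF : ∀ dc (w' : ℂ), F dc w' =
      (∏ j : Fin (n + 1), lastG n θ h v dc.1 j w') *
        ∏ i ∈ Finset.univ.erase (Fin.last n), ∏ j : Fin (n + 1),
          sosW θ h (u i - v j) (dc.1 i.succ j.castSucc) (dc.1 i.castSucc j.castSucc)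
            (dc.1 i.castSucc j.succ) (dc.1 i.succ j.succ) := by
    intro dc w'
    simp only [hFdef]
    rw [← Finset.mul_prod_erase Finset.univ
      (fun i : Fin (n + 1) => ∏ j : Fin (n + 1),
        sosW θ h (Function.update u (Fin.last n) w' i - v j) (dc.1 i.succ j.castSucc)
          (dc.1 i.castSucc j.castSucc) (dc.1 i.castSucc j.succ) (dc.1 i.succ j.succ))
      (Finset.mem_univ (Fin.last n))]
    congr 1
    · refine Finset.prod_congr rfl fun j _ => ?_
      rw [Function.update_self]
      rfl
    · refine Finset.prod_congr rfl fun i hi => ?_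
      refine Finset.prod_congr rfl fun j _ => ?_
      rw [Function.update_of_ne (Finset.ne_of_mem_erase hi)]
  refine ⟨?_, ?_, ?_⟩
  · -- differentiability
    have : (fun w : ℂ => sosZ (n + 1) θ h (Function.update u (Fin.last n) w) v lam) =
        fun w => ∑ dc, F dc w := funext fun w => hZ w
    rw [this]
    refine Differentiable.fun_sum fun dc _ => ?_
    refine diff_finset_prod _ _ fun i _ => ?_
    refine diff_finset_prod _ _ fun j _ => ?_
    by_cases hi : i = Fin.last n
    · subst hi
      simp only [Function.update_self]
      exact sosW_diff θ hθd h (v j) _ _ _ _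
    · simp only [Function.update_of_ne hi]
      exact differentiable_const _
  · -- shift by 1
    intro w
    rw [hZ, hZ, Finset.mul_sum]
    refine Finset.sum_congr rfl fun dc _ => ?_
    rw [hF dc (w + 1), hF dc w]
    have hhead : (∏ j : Fin (n + 1), lastG n θ h v dc.1 j (w + 1)) =
        (-1 : ℂ) ^ (n + 1) * ∏ j : Fin (n + 1), lastG n θ h v dc.1 j w := by
      have : ∀ j : Fin (n + 1), lastG n θ h v dc.1 j (w + 1) =
          (-1 : ℂ) * lastG n θ h v dc.1 j w := by
        intro j
        unfold lastG
        rw [show w + 1 - v j = (w - v j) + 1 by ring, sosW_add_one θ hp1]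
        ring
      rw [Finset.prod_congr rfl fun j _ => this j, Finset.prod_mul_distrib,
        Finset.prod_const, Finset.card_univ, Fintype.card_fin]
    rw [hhead]
    ring
  · -- shift by τ
    intro w
    rw [hZ, hZ, Finset.mul_sum]
    refine Finset.sum_congr rfl fun dc _ => ?_
    rw [hF dc (w + τ), hF dc w, lastRow_tau n τ θ hp2 h lam v dc.1 dc.2 w]
    have hBprod : (∏ j : Fin (n + 1), lastB n τ v w j) =
        (-1 : ℂ) ^ (n + 1) *
          Complex.exp (∑ j : Fin (n + 1),
            (-(2 * (Real.pi : ℂ) * Complex.I * (w - v j)) - (Real.pi : ℂ) * Complex.I * τ)) := by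
      rw [Complex.exp_sum]
      rw [Finset.prod_congr rfl fun (j : Fin (n + 1)) _ =>
        show lastB n τ v w j = (-1 : ℂ) *
          Complex.exp (-(2 * (Real.pi : ℂ) * Complex.I * (w - v j)) -
            (Real.pi : ℂ) * Complex.I * τ) from by unfold lastB; ring]
      rw [Finset.prod_mul_distrib, Finset.prod_const, Finset.card_univ, Fintype.card_fin]
    have hsum : (∑ j : Fin (n + 1),
        (-(2 * (Real.pi : ℂ) * Complex.I * (w - v j)) - (Real.pi : ℂ) * Complex.I * τ)) =
        2 * (Real.pi : ℂ) * Complex.I * (∑ j, v j) -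
          2 * (Real.pi : ℂ) * Complex.I * (((n : ℂ) + 1) * w) -
          ((n : ℂ) + 1) * ((Real.pi : ℂ) * Complex.I * τ) := by
      rw [Finset.sum_congr rfl fun (j : Fin (n + 1)) _ =>
        show -(2 * (Real.pi : ℂ) * Complex.I * (w - v j)) - (Real.pi : ℂ) * Complex.I * τ =
          2 * (Real.pi : ℂ) * Complex.I * v j +
            (-(2 * (Real.pi : ℂ) * Complex.I * w) - (Real.pi : ℂ) * Complex.I * τ) from by ring]
      rw [Finset.sum_add_distrib, ← Finset.mul_sum, Finset.sum_const, Finset.card_univ,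
        Fintype.card_fin, nsmul_eq_mul]
      push_cast
      ring
    have hexp : Complex.exp (2 * (Real.pi : ℂ) * Complex.I * (∑ j, v j) -
          2 * (Real.pi : ℂ) * Complex.I * (((n : ℂ) + 1) * w) -
          ((n : ℂ) + 1) * ((Real.pi : ℂ) * Complex.I * τ)) *
        Complex.exp (2 * (Real.pi : ℂ) * Complex.I * lam) =
        Complex.exp (2 * (Real.pi : ℂ) * Complex.I * (lam + ∑ j, v j)) *
          Complex.exp (-(2 * (Real.pi : ℂ) * Complex.I * ((n : ℂ) + 1) * w) -
            (Real.pi : ℂ) * Complex.I * ((n : ℂ) + 1) * τ) := by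
      rw [← Complex.exp_add, ← Complex.exp_add]
      congr 1
      ring
    rw [hBprod, hsum]
    rw [show ((-1 : ℂ) ^ (n + 1) *
        Complex.exp (2 * (Real.pi : ℂ) * Complex.I * (∑ j, v j) -
          2 * (Real.pi : ℂ) * Complex.I * (((n : ℂ) + 1) * w) -
          ((n : ℂ) + 1) * ((Real.pi : ℂ) * Complex.I * τ))) *
        Complex.exp (2 * (Real.pi : ℂ) * Complex.I * lam) *
        (∏ j : Fin (n + 1), lastG n θ h v dc.1 j w) =
        (-1 : ℂ) ^ (n + 1) *
          (Complex.exp (2 * (Real.pi : ℂ) * Complex.I * (∑ j, v j) -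
            2 * (Real.pi : ℂ) * Complex.I * (((n : ℂ) + 1) * w) -
            ((n : ℂ) + 1) * ((Real.pi : ℂ) * Complex.I * τ)) *
          Complex.exp (2 * (Real.pi : ℂ) * Complex.I * lam)) *
          (∏ j : Fin (n + 1), lastG n θ h v dc.1 j w) from by ring, hexp]
    ring
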